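/- Let a, b, c, d be integers such that ad − bc is a prime element of ℤ, and let L be the additive subgroup of ℤ × ℤ generated by (a, b) and (c, d). Then L is an ideal of the product ring ℤ × ℤ if and only if ad − bc divides gcd(a, c) or ad − bc divides gcd(b, d). -/

import Mathlib

lemma mem_closure_pair_iff_det (a b c d u v : ℤ) (hp : a * d - b * c ≠ 0) :
    (u, v) ∈ AddSubgroup.closure {((a : ℤ), (b : ℤ)), (c, d)} ↔
      (a * d - b * c) ∣ (d * u - c * v) ∧ (a * d - b * c) ∣ (a * v - b * u) := by
  rw [AddSubgroup.mem_closure_pair]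
  constructor
  · rintro ⟨m, n, hmn⟩
    rw [Prod.ext_iff] at hmn
    obtain ⟨h1, h2⟩ := hmn
    simp only [Prod.smul_fst, Prod.smul_snd, Prod.fst_add, Prod.snd_add, Prod.mk.injEq,
      smul_eq_mul, Prod.mk_add_mk] at h1 h2
    exact ⟨⟨m, by rw [← h1, ← h2]; ring⟩, ⟨n, by rw [← h1, ← h2]; ring⟩⟩
  · rintro ⟨⟨k1, hk1⟩, ⟨k2, hk2⟩⟩
    refine ⟨k1, k2, ?_⟩
    have e1 : k1 * a + k2 * c = u := by
      apply mul_left_cancel₀ hp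
      linear_combination (-a) * hk1 + (-c) * hk2
    have e2 : k1 * b + k2 * d = v := by
      apply mul_left_cancel₀ hp
      linear_combination (-b) * hk1 + (-d) * hk2
    ext <;> simp [smul_eq_mul] <;> [exact e1; exact e2]

/-- If `ad - bc` is a prime element of `ℤ`, then the subgroup of `ℤ × ℤ` generated by
`(a, b)` and `(c, d)` is an ideal iff `ad - bc` divides `gcd(a, c)` or `gcd(b, d)`. -/
theorem subgroup_ideal_iff_of_det_prime (a b c d : ℤ) (h : Prime (a * d - b * c)) :
    (∃ I : Ideal (ℤ × ℤ),
      (I : Set (ℤ × ℤ)) = (AddSubgroup.closure {(a, b), (c, d)} : Set (ℤ × ℤ))) ↔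
    ((a * d - b * c) ∣ (Int.gcd a c : ℤ) ∨ (a * d - b * c) ∣ (Int.gcd b d : ℤ)) := by
  have hp : a * d - b * c ≠ 0 := h.ne_zero
  constructor
  · rintro ⟨I, hI⟩
    have hmem : ∀ x : ℤ × ℤ, x ∈ I ↔ x ∈ AddSubgroup.closure {((a:ℤ),(b:ℤ)), (c, d)} := by
      intro x
      constructor <;> intro hx
      · have : x ∈ (I : Set (ℤ × ℤ)) := hx
        rwa [hI] at this
      · have : x ∈ (I : Set (ℤ × ℤ)) := by rw [hI]; exact hx
        exact this
    have hab : ((a:ℤ), (b:ℤ)) ∈ I := (hmem _).2 (AddSubgroup.subset_closure (by simp))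
    have hcd : ((c:ℤ), (d:ℤ)) ∈ I := (hmem _).2 (AddSubgroup.subset_closure (by simp))
    have h1 : ((a:ℤ), (0:ℤ)) ∈ I := by
      have := I.mul_mem_left ((1:ℤ), (0:ℤ)) hab
      simpa using this
    have h2 : ((0:ℤ), (b:ℤ)) ∈ I := by
      have := I.mul_mem_left ((0:ℤ), (1:ℤ)) hab
      simpa using this
    have h3 : ((0:ℤ), (d:ℤ)) ∈ I := by
      have := I.mul_mem_left ((0:ℤ), (1:ℤ)) hcd
      simpa using this
    have d1 := ((mem_closure_pair_iff_det a b c d a 0 hp).1 ((hmem _).1 h1))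
    have d2 := ((mem_closure_pair_iff_det a b c d 0 b hp).1 ((hmem _).1 h2))
    have d3 := ((mem_closure_pair_iff_det a b c d 0 d hp).1 ((hmem _).1 h3))
    have had : (a * d - b * c) ∣ a * d := by simpa [mul_comm] using d1.1
    have hab' : (a * d - b * c) ∣ a * b := by
      have := d2.2; simpa using this
    have hcd' : (a * d - b * c) ∣ c * d := by
      have := d3.1
      have : (a * d - b * c) ∣ -(c * d) := by simpa using this
      simpa using this.neg_right
    have hbc : (a * d - b * c) ∣ b * c := by
      have : (a * d - b * c) ∣ a * d - (a * d - b * c) := had.sub dvd_rfl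
      simpa using this
    have key : ((a * d - b * c) ∣ a ∧ (a * d - b * c) ∣ c) ∨
        ((a * d - b * c) ∣ b ∧ (a * d - b * c) ∣ d) := by
      rcases h.dvd_mul.1 had with ha | hd
      · rcases h.dvd_mul.1 hbc with hb | hc
        · rcases h.dvd_mul.1 hcd' with hc | hd
          · exact Or.inl ⟨ha, hc⟩
          · exact Or.inr ⟨hb, hd⟩
        · exact Or.inl ⟨ha, hc⟩
      · rcases h.dvd_mul.1 hbc with hb | hc
        · exact Or.inr ⟨hb, hd⟩
        · rcases h.dvd_mul.1 hab' with ha | hb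
          · exact Or.inl ⟨ha, hc⟩
          · exact Or.inr ⟨hb, hd⟩
    rcases key with ⟨ha, hc⟩ | ⟨hb, hd⟩
    · exact Or.inl (Int.dvd_coe_gcd ha hc)
    · exact Or.inr (Int.dvd_coe_gcd hb hd)
  · intro hdvd
    have hkey : ((a * d - b * c) ∣ a ∧ (a * d - b * c) ∣ c) ∨
        ((a * d - b * c) ∣ b ∧ (a * d - b * c) ∣ d) := by
      rcases hdvd with hg | hg
      · exact Or.inl ⟨hg.trans (Int.gcd_dvd_left _ _), hg.trans (Int.gcd_dvd_right _ _)⟩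
      · exact Or.inr ⟨hg.trans (Int.gcd_dvd_left _ _), hg.trans (Int.gcd_dvd_right _ _)⟩
    refine ⟨{ carrier := (AddSubgroup.closure {((a:ℤ),(b:ℤ)), (c, d)} : Set (ℤ × ℤ)),
              add_mem' := fun h1 h2 => AddSubgroup.add_mem _ h1 h2,
              zero_mem' := AddSubgroup.zero_mem _,
              smul_mem' := ?_ }, rfl⟩
    rintro ⟨r1, r2⟩ ⟨u, v⟩ hx
    simp only [Set.mem_setOf_eq, SetLike.mem_coe] at hx ⊢
    have hx' := (mem_closure_pair_iff_det a b c d u v hp).1 hx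
    obtain ⟨⟨k1, hk1⟩, ⟨k2, hk2⟩⟩ := hx'
    have : ((r1, r2) : ℤ × ℤ) • ((u, v) : ℤ × ℤ) = (r1 * u, r2 * v) := rfl
    rw [this]
    rw [mem_closure_pair_iff_det a b c d _ _ hp]
    rcases hkey with ⟨⟨a', ha'⟩, ⟨c', hc'⟩⟩ | ⟨⟨b', hb'⟩, ⟨d', hd'⟩⟩
    · constructor
      · exact ⟨r1 * k1 + r1 * c' * v - c' * r2 * v, by linear_combination r1 * hk1 + (r1 * v - r2 * v) * hc'⟩
      · exact ⟨r1 * k2 + r2 * a' * v - r1 * a' * v, by linear_combination r1 * hk2 + (r2 * v - r1 * v) * ha'⟩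
    · constructor
      · exact ⟨r2 * k1 + d' * u * r1 - d' * u * r2, by linear_combination r2 * hk1 + (r1 * u - r2 * u) * hd'⟩
      · exact ⟨r2 * k2 + b' * u * r2 - b' * u * r1, by linear_combination r2 * hk2 + (r2 * u - r1 * u) * hb'⟩
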